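/- Let C(k,j) denote the sum of signs over all (k−j, j−1)-unshuffles in the symmetric group S_{k−1}. Then for integers p ≥ q ≥ 1, one has C(2p, 2q) = binomial(p−1, q−1). -/

import Mathlib

open scoped Classical

open Finset Equiv Equiv.Perm


/-- closed form -/
def Bval (n m : ℕ) : ℕ := if n % 2 = 0 ∧ m % 2 = 1 then 0 else (n / 2).choose (m / 2)

noncomputable def gSum (n m : ℕ) : ℤ :=
  ∑ S ∈ Finset.powersetCard m (Finset.range n), (-1 : ℤ) ^ (∑ x ∈ S, x)

lemma gSum_zero_right (n : ℕ) : gSum n 0 = 1 := by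
  simp [gSum]

lemma gSum_zero_succ (m : ℕ) : gSum 0 (m + 1) = 0 := by
  simp [gSum, Finset.powersetCard_eq_empty.2 (by simp : (∅ : Finset ℕ).card < m + 1)]

lemma gSum_succ_succ (n m : ℕ) :
    gSum (n + 1) (m + 1) = gSum n (m + 1) + (-1) ^ n * gSum n m := by
  classical
  have hn : n ∉ Finset.range n := by simp
  rw [gSum, Finset.range_add_one, Finset.powersetCard_succ_insert hn,
    Finset.sum_union]
  · congr 1
    rw [Finset.sum_image]
    · rw [gSum, Finset.mul_sum]
      refine Finset.sum_congr rfl fun S hS => ?_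
      have hnS : n ∉ S := fun h => hn ((Finset.mem_powersetCard.1 hS).1 h)
      rw [Finset.sum_insert hnS, pow_add]
    · intro S hS T hT h
      have hnS : n ∉ S := fun hx => hn ((Finset.mem_powersetCard.1 hS).1 hx)
      have hnT : n ∉ T := fun hx => hn ((Finset.mem_powersetCard.1 hT).1 hx)
      have := congrArg (Finset.erase · n) h
      simpa [Finset.erase_insert hnS, Finset.erase_insert hnT] using this
  · rw [Finset.disjoint_left]
    intro S hS hS'
    obtain ⟨T, hT, rfl⟩ := Finset.mem_image.1 hS'
    have hnT : n ∉ T := fun hx => hn ((Finset.mem_powersetCard.1 hT).1 hx)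
    exact hn ((Finset.mem_powersetCard.1 hS).1 (Finset.mem_insert_self n T))


lemma Bval_oo (a b : ℕ) : Bval (2 * a + 1) (2 * b + 1) = a.choose b := by
  unfold Bval
  rw [if_neg (by omega), show (2 * a + 1) / 2 = a by omega, show (2 * b + 1) / 2 = b by omega]

lemma Bval_oe (a b : ℕ) : Bval (2 * a + 1) (2 * b) = a.choose b := by
  unfold Bval
  rw [if_neg (by omega), show (2 * a + 1) / 2 = a by omega, show (2 * b) / 2 = b by omega]

lemma Bval_ee (a b : ℕ) : Bval (2 * a) (2 * b) = a.choose b := by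
  unfold Bval
  rw [if_neg (by omega), show (2 * a) / 2 = a by omega, show (2 * b) / 2 = b by omega]

lemma Bval_eo (a b : ℕ) : Bval (2 * a) (2 * b + 1) = 0 := by
  unfold Bval
  rw [if_pos (by omega)]

lemma gSum_eq (n : ℕ) : ∀ m, gSum n m = (-1) ^ (∑ i ∈ Finset.range m, i) * (Bval n m : ℤ) := by
  induction n with
  | zero =>
    intro m
    match m with
    | 0 => simp [gSum_zero_right, Bval]
    | m + 1 =>
      rw [gSum_zero_succ]
      have : Bval 0 (m + 1) = 0 := by
        unfold Bval
        rcases Nat.even_or_odd m with h | h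
        · obtain ⟨b, rfl⟩ := h; simp; omega
        · obtain ⟨b, rfl⟩ := h
          have : (2 * b + 1 + 1) / 2 = b + 1 := by omega
          simp [this, Nat.choose_eq_zero_of_lt]
      simp [this]
  | succ n ih =>
    intro m
    match m with
    | 0 =>
      simp [gSum_zero_right, Bval]
    | m + 1 =>
      rw [gSum_succ_succ, ih, ih, Finset.sum_range_succ]
      rcases Nat.even_or_odd n with ⟨a, rfl⟩ | ⟨a, rfl⟩ <;>
        rcases Nat.even_or_odd m with ⟨b, rfl⟩ | ⟨b, rfl⟩
      all_goals try simp only [← Nat.two_mul]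
      · rw [Bval_oo, Bval_ee, Bval_eo]
        simp [pow_add, pow_mul]
      · rw [show 2 * b + 1 + 1 = 2 * (b + 1) by ring,
          Bval_oe, Bval_ee, Bval_eo]
        simp [pow_add, pow_mul]; try ring
      · rw [show 2 * a + 1 + 1 = 2 * (a + 1) by ring, Bval_eo, Bval_oo, Bval_oe]
        simp [pow_add, pow_mul]; try ring
      · rw [show 2 * a + 1 + 1 = 2 * (a + 1) by ring,
          show 2 * b + 1 + 1 = 2 * (b + 1) by ring,
          Bval_ee, Bval_oe, Bval_oo, Nat.choose_succ_succ]
        push_cast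
        simp [pow_add, pow_mul]; try ring

variable {n m : ℕ}

def IsUnsh (n m : ℕ) (σ : Equiv.Perm (Fin n)) : Prop :=
  (∀ i j : Fin n, i < j → (j : ℕ) < m → σ i < σ j) ∧
  (∀ i j : Fin n, i < j → m ≤ (i : ℕ) → σ i < σ j)

/-- first block -/
def fb (n m : ℕ) : Finset (Fin n) := Finset.univ.filter fun i => (i : ℕ) < m

lemma mem_fb {i : Fin n} : i ∈ fb n m ↔ (i : ℕ) < m := by simp [fb]

lemma card_fb (hm : m ≤ n) : (fb n m).card = m := by
  have : fb n m = (Finset.range m).attachFin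
      (fun x hx => lt_of_lt_of_le (Finset.mem_range.1 hx) hm) := by
    ext a; simp [fb, Finset.mem_attachFin]
  rw [this, Finset.card_attachFin, Finset.card_range]

lemma card_univ_filter_lt {k : ℕ} (i : Fin k) :
    (Finset.univ.filter fun j : Fin k => j < i).card = (i : ℕ) := by
  have : (Finset.univ.filter fun j : Fin k => j < i) =
      (Finset.range (i : ℕ)).attachFin
        (fun x hx => lt_trans (Finset.mem_range.1 hx) i.2) := by
    ext a
    simp only [Finset.mem_filter, Finset.mem_univ, true_and, Finset.mem_attachFin,
      Finset.mem_range, Fin.lt_def]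
  rw [this, Finset.card_attachFin, Finset.card_range]

noncomputable def blockImage (n m : ℕ) (σ : Equiv.Perm (Fin n)) : Finset (Fin n) :=
  (fb n m).image σ

lemma card_blockImage (hm : m ≤ n) (σ : Equiv.Perm (Fin n)) :
    (blockImage n m σ).card = m := by
  rw [blockImage, Finset.card_image_of_injective _ σ.injective, card_fb hm]

lemma card_compl_of_card {S : Finset (Fin n)} (hS : S.card = m) : Sᶜ.card = n - m := by
  rw [Finset.card_compl, hS, Fintype.card_fin]

noncomputable def permOf (hm : m ≤ n) (S : Finset (Fin n)) (hS : S.card = m) :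
    Equiv.Perm (Fin n) :=
  Equiv.ofBijective
    (fun i => if h : (i : ℕ) < m then S.orderEmbOfFin hS ⟨i, h⟩
      else Sᶜ.orderEmbOfFin (card_compl_of_card hS) ⟨(i : ℕ) - m, by
        have := i.2; omega⟩)
    (by
      rw [Finite.injective_iff_bijective.symm]
      intro i j hij
      dsimp only at hij
      by_cases hi : (i : ℕ) < m <;> by_cases hj : (j : ℕ) < m
      · rw [dif_pos hi, dif_pos hj] at hij
        have := (S.orderEmbOfFin hS).injective hij
        have h2 := congrArg Fin.val this
        exact Fin.ext h2
      · rw [dif_pos hi, dif_neg hj] at hij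
        exact absurd (hij ▸ S.orderEmbOfFin_mem hS ⟨i, hi⟩)
          (Finset.mem_compl.1 (Sᶜ.orderEmbOfFin_mem (card_compl_of_card hS) _))
      · rw [dif_neg hi, dif_pos hj] at hij
        exact absurd (hij ▸ Sᶜ.orderEmbOfFin_mem (card_compl_of_card hS) _)
          (fun hc => Finset.mem_compl.1 hc (S.orderEmbOfFin_mem hS ⟨j, hj⟩))
      · rw [dif_neg hi, dif_neg hj] at hij
        have := (Sᶜ.orderEmbOfFin (card_compl_of_card hS)).injective hij
        have h2 := congrArg Fin.val this
        simp only at h2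
        have := i.2; have := j.2
        exact Fin.ext (by omega))

lemma permOf_apply_lt (hm : m ≤ n) {S : Finset (Fin n)} (hS : S.card = m) (i : Fin n)
    (h : (i : ℕ) < m) : permOf hm S hS i = S.orderEmbOfFin hS ⟨i, h⟩ := by
  simp [permOf, Equiv.ofBijective_apply, dif_pos h]

lemma permOf_apply_ge (hm : m ≤ n) {S : Finset (Fin n)} (hS : S.card = m) (i : Fin n)
    (h : ¬ (i : ℕ) < m) : permOf hm S hS i =
      Sᶜ.orderEmbOfFin (card_compl_of_card hS) ⟨(i : ℕ) - m, by have := i.2; omega⟩ := by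
  simp [permOf, Equiv.ofBijective_apply, dif_neg h]

lemma permOf_isUnsh (hm : m ≤ n) {S : Finset (Fin n)} (hS : S.card = m) :
    IsUnsh n m (permOf hm S hS) := by
  constructor
  · intro i j hij hj
    have hi : (i : ℕ) < m := lt_trans (Fin.lt_def.1 hij) hj
    rw [permOf_apply_lt hm hS i hi, permOf_apply_lt hm hS j hj]
    exact (S.orderEmbOfFin hS).strictMono (by exact hij)
  · intro i j hij hi
    have hj : ¬ (j : ℕ) < m := by have := Fin.lt_def.1 hij; omega
    rw [permOf_apply_ge hm hS i (by omega), permOf_apply_ge hm hS j hj]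
    exact (Sᶜ.orderEmbOfFin (card_compl_of_card hS)).strictMono
      (by simp only [Fin.mk_lt_mk]; have := Fin.lt_def.1 hij; omega)

lemma blockImage_permOf (hm : m ≤ n) {S : Finset (Fin n)} (hS : S.card = m) :
    blockImage n m (permOf hm S hS) = S := by
  refine Finset.eq_of_subset_of_card_le ?_ ?_
  · intro x hx
    obtain ⟨i, hi, rfl⟩ := Finset.mem_image.1 hx
    rw [permOf_apply_lt hm hS i (mem_fb.1 hi)]
    exact S.orderEmbOfFin_mem hS _
  · rw [hS, card_blockImage hm]

lemma isUnsh_eq_permOf (hm : m ≤ n) (σ : Equiv.Perm (Fin n)) (hσ : IsUnsh n m σ) :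
    σ = permOf hm (blockImage n m σ) (card_blockImage hm σ) := by
  apply Equiv.ext
  intro i
  by_cases h : (i : ℕ) < m
  · rw [permOf_apply_lt hm _ i h]
    have hfs : ∀ x : Fin m, σ (Fin.castLE hm x) ∈ blockImage n m σ := fun x =>
      Finset.mem_image_of_mem σ (mem_fb.2 x.2)
    have hmono : StrictMono fun x : Fin m => σ (Fin.castLE hm x) := fun a b hab =>
      hσ.1 _ _ (by rw [Fin.lt_def, Fin.coe_castLE, Fin.coe_castLE]; exact hab)
        (by rw [Fin.coe_castLE]; exact b.2)
    have := congrFun (Finset.orderEmbOfFin_unique (card_blockImage hm σ) hfs hmono) ⟨i, h⟩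
    simpa using this
  · rw [permOf_apply_ge hm _ i h]
    have hfs : ∀ x : Fin (n - m), σ ⟨m + (x : ℕ), by have := x.2; omega⟩ ∈
        (blockImage n m σ)ᶜ := by
      intro x
      rw [Finset.mem_compl]
      intro hc
      obtain ⟨b, hb, hb2⟩ := Finset.mem_image.1 hc
      have := σ.injective hb2
      have hbv := congrArg Fin.val this
      simp only at hbv
      have := mem_fb.1 hb
      omega
    have hmono : StrictMono fun x : Fin (n - m) =>
        σ ⟨m + (x : ℕ), by have := x.2; omega⟩ := fun a b hab =>
      hσ.2 _ _ (by rw [Fin.lt_def]; exact Nat.add_lt_add_left hab m) (Nat.le_add_right m _)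
    have := congrFun
      (Finset.orderEmbOfFin_unique (card_compl_of_card (card_blockImage hm σ)) hfs hmono)
      ⟨(i : ℕ) - m, by have := i.2; omega⟩
    simp only at this
    rw [← this]
    congr 1
    exact Fin.ext (by dsimp only; omega)

lemma sign_eq_signAux (σ : Equiv.Perm (Fin n)) :
    Equiv.Perm.sign σ = Equiv.Perm.signAux σ := by
  refine Equiv.Perm.swap_induction_on σ (by simp) ?_
  intro f x y hxy ih
  rw [Equiv.Perm.sign_mul, Equiv.Perm.sign_swap hxy, Equiv.Perm.signAux_mul,
    Equiv.Perm.signAux_swap hxy, ih]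

lemma signAux_eq_pow (σ : Equiv.Perm (Fin n)) :
    Equiv.Perm.signAux σ =
      (-1 : ℤˣ) ^ ((Equiv.Perm.finPairsLT n).filter fun x => σ x.1 ≤ σ x.2).card := by
  rw [Equiv.Perm.signAux, Finset.prod_ite, Finset.prod_const, Finset.prod_const, one_pow,
    mul_one]

lemma inv_filter_eq (hm : m ≤ n) (σ : Equiv.Perm (Fin n)) (hσ : IsUnsh n m σ) :
    (((Equiv.Perm.finPairsLT n).filter fun x => σ x.1 ≤ σ x.2).card)
      = (((blockImage n m σ) ×ˢ (blockImage n m σ)ᶜ).filter fun p => p.2 < p.1).card := by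
  set S := blockImage n m σ with hSdef
  have hmemS : ∀ i : Fin n, (i : ℕ) < m → σ i ∈ S := fun i hi =>
    Finset.mem_image_of_mem σ (mem_fb.2 hi)
  have hmemSc : ∀ i : Fin n, ¬ (i : ℕ) < m → σ i ∈ Sᶜ := by
    intro i hi
    rw [Finset.mem_compl]
    intro hc
    obtain ⟨b, hb, hb2⟩ := Finset.mem_image.1 hc
    have := σ.injective hb2
    subst this
    exact hi (mem_fb.1 hb)
  refine Finset.card_bij (fun x _ => (σ x.2, σ x.1)) ?_ ?_ ?_
  · rintro ⟨a, b⟩ hx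
    rw [Finset.mem_filter, Equiv.Perm.mem_finPairsLT] at hx
    obtain ⟨hba, hle⟩ := hx
    have hne : σ a ≠ σ b := fun h => absurd (σ.injective h) (ne_of_gt hba)
    have hlt : σ a < σ b := lt_of_le_of_ne hle hne
    have hbm : (b : ℕ) < m := by
      by_contra hbm
      exact absurd (hσ.2 b a hba (le_of_not_gt hbm)) (asymm hlt)
    have ham : ¬ (a : ℕ) < m := by
      intro ham
      exact absurd (hσ.1 b a hba ham) (asymm hlt)
    rw [Finset.mem_filter, Finset.mem_product]
    exact ⟨⟨hmemS b hbm, hmemSc a ham⟩, hlt⟩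
  · rintro ⟨a1, a2⟩ _ ⟨b1, b2⟩ _ h
    rw [Prod.ext_iff] at h
    obtain ⟨h1, h2⟩ := h
    have e2 := σ.injective h1
    have e1 := σ.injective h2
    subst e1; subst e2; rfl
  · rintro ⟨s, t⟩ hp
    rw [Finset.mem_filter, Finset.mem_product] at hp
    obtain ⟨⟨hs, ht⟩, hts⟩ := hp
    obtain ⟨b, hb, rfl⟩ := Finset.mem_image.1 hs
    refine ⟨⟨σ⁻¹ t, b⟩, ?_, ?_⟩
    · rw [Finset.mem_filter, Equiv.Perm.mem_finPairsLT]
      have hma : ¬ ((σ⁻¹ t : Fin n) : ℕ) < m := by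
        intro hc
        have := hmemS _ hc
        rw [show σ (σ⁻¹ t) = t from σ.apply_symm_apply t] at this
        exact (Finset.mem_compl.1 ht) this
      constructor
      · show b < σ⁻¹ t
        rw [Fin.lt_def]
        have := mem_fb.1 hb
        omega
      · show σ (σ⁻¹ t) ≤ σ b
        rw [show σ (σ⁻¹ t) = t from σ.apply_symm_apply t]
        exact le_of_lt hts
    · simp [Equiv.apply_symm_apply]

lemma cross_card (S : Finset (Fin n)) :
    ((S ×ˢ Sᶜ).filter fun p => p.2 < p.1).card
      = ∑ s ∈ S, (Sᶜ.filter fun t => t < s).card := by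
  rw [Finset.card_eq_sum_card_fiberwise
    (f := Prod.fst) (t := S) (fun p hp => (Finset.mem_product.1 (Finset.mem_filter.1 hp).1).1)]
  refine Finset.sum_congr rfl fun s hs => ?_
  have : (((S ×ˢ Sᶜ).filter fun p => p.2 < p.1).filter fun p => p.1 = s)
      = {s} ×ˢ (Sᶜ.filter fun t => t < s) := by
    ext ⟨u, v⟩
    simp only [Finset.mem_filter, Finset.mem_product, Finset.mem_singleton]
    constructor
    · rintro ⟨⟨⟨hu, hv⟩, hlt⟩, rfl⟩
      exact ⟨rfl, hv, hlt⟩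
    · rintro ⟨rfl, hv, hlt⟩
      exact ⟨⟨⟨hs, hv⟩, hlt⟩, rfl⟩
  rw [this, Finset.card_product, Finset.card_singleton, one_mul]

lemma count_lt_split (S : Finset (Fin n)) (s : Fin n) :
    (Sᶜ.filter fun t => t < s).card + (S.filter fun t => t < s).card = (s : ℕ) := by
  have h1 := Finset.card_filter_add_card_filter_not
    (s := Finset.univ.filter fun t : Fin n => t < s) (p := fun t => t ∈ S)
  have e1 : ((Finset.univ.filter fun t : Fin n => t < s).filter fun t => t ∈ S)
      = S.filter fun t => t < s := by
    ext a; simp [and_comm]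
  have e2 : ((Finset.univ.filter fun t : Fin n => t < s).filter fun t => ¬ t ∈ S)
      = Sᶜ.filter fun t => t < s := by
    ext a; simp [and_comm]
  rw [e1, e2] at h1
  rw [add_comm] at h1
  rw [h1, card_univ_filter_lt]

lemma rank_sum {S : Finset (Fin n)} (hS : S.card = m) :
    ∑ s ∈ S, (S.filter fun t => t < s).card = ∑ i ∈ Finset.range m, i := by
  have hinj : Function.Injective (S.orderEmbOfFin hS) := (S.orderEmbOfFin hS).injective
  rw [← Fin.sum_univ_eq_sum_range]
  refine (Finset.sum_bij (fun (i : Fin m) _ => S.orderEmbOfFin hS i)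
    (fun i _ => S.orderEmbOfFin_mem hS i) (fun a _ b _ h => hinj h) ?_ ?_).symm
  · intro s hs
    have : s ∈ Set.range (S.orderEmbOfFin hS) := by
      rw [Finset.range_orderEmbOfFin]; exact hs
    obtain ⟨i, rfl⟩ := this
    exact ⟨i, Finset.mem_univ i, rfl⟩
  · intro i _
    have key : S.filter (fun t => t < S.orderEmbOfFin hS i)
        = (Finset.univ.filter fun j : Fin m => j < i).image (S.orderEmbOfFin hS) := by
      ext x
      simp only [Finset.mem_filter, Finset.mem_image, Finset.mem_univ, true_and]
      constructor
      · rintro ⟨hx, hlt⟩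
        have : x ∈ Set.range (S.orderEmbOfFin hS) := by
          rw [Finset.range_orderEmbOfFin]; exact hx
        obtain ⟨j, rfl⟩ := this
        exact ⟨j, (S.orderEmbOfFin hS).strictMono.lt_iff_lt.1 hlt, rfl⟩
      · rintro ⟨j, hj, rfl⟩
        exact ⟨S.orderEmbOfFin_mem hS j, (S.orderEmbOfFin hS).strictMono hj⟩
    rw [key, Finset.card_image_of_injective _ hinj, card_univ_filter_lt]

lemma sign_isUnsh (hm : m ≤ n) (σ : Equiv.Perm (Fin n)) (hσ : IsUnsh n m σ) :
    (Equiv.Perm.sign σ : ℤ) =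
      (-1) ^ ((∑ x ∈ blockImage n m σ, (x : ℕ)) + ∑ i ∈ Finset.range m, i) := by
  set S := blockImage n m σ with hSdef
  set A := ((Equiv.Perm.finPairsLT n).filter fun x => σ x.1 ≤ σ x.2).card with hA
  have key : A + ∑ i ∈ Finset.range m, i = ∑ x ∈ S, (x : ℕ) := by
    rw [hA, inv_filter_eq hm σ hσ, cross_card, ← rank_sum (card_blockImage hm σ),
      ← Finset.sum_add_distrib]
    rw [← hSdef]
    exact Finset.sum_congr rfl fun s _ => count_lt_split S s
  have hsgn : (Equiv.Perm.sign σ : ℤ) = (-1) ^ A := by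
    rw [sign_eq_signAux, signAux_eq_pow]
    push_cast
    rfl
  rw [hsgn]
  have h2 : (-1 : ℤ) ^ A = (-1) ^ (A + 2 * (∑ i ∈ Finset.range m, i)) := by
    rw [pow_add, pow_mul]; norm_num
  rw [h2]
  congr 1
  omega
/-- Sum of the signs of all permutations of `Fin n` that are strictly increasing
on the first `m` positions and on the remaining `n - m` positions.
For `n = k - 1` and `m = k - j` these are the `(k-j, j-1)`-unshuffles. -/
noncomputable def unshuffleSignSum (n m : ℕ) : ℤ :=
  ∑ σ : Equiv.Perm (Fin n),
    if ((∀ i j : Fin n, i < j → (j : ℕ) < m → σ i < σ j) ∧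
        (∀ i j : Fin n, i < j → m ≤ (i : ℕ) → σ i < σ j)) then
      (Equiv.Perm.sign σ : ℤ) else 0

lemma unshuffleSignSum_eq_filter (n m : ℕ) :
    unshuffleSignSum n m
      = ∑ σ ∈ Finset.univ.filter (IsUnsh n m), (Equiv.Perm.sign σ : ℤ) := by
  unfold unshuffleSignSum
  rw [Finset.sum_filter]
  refine Finset.sum_congr rfl fun σ _ => ?_
  exact if_congr Iff.rfl rfl rfl

lemma permOf_congr (hm : m ≤ n) {S T : Finset (Fin n)} (h : S = T) (hS : S.card = m) :
    permOf hm S hS = permOf hm T (h ▸ hS) := by subst h; rfl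

lemma bridge (hm : m ≤ n) :
    unshuffleSignSum n m = ∑ S ∈ Finset.powersetCard m (Finset.univ : Finset (Fin n)),
      (-1 : ℤ) ^ ((∑ x ∈ S, (x : ℕ)) + ∑ i ∈ Finset.range m, i) := by
  rw [unshuffleSignSum_eq_filter]
  refine Finset.sum_bij (fun σ _ => blockImage n m σ) ?_ ?_ ?_ ?_
  · intro σ hσ
    rw [Finset.mem_powersetCard]
    exact ⟨Finset.subset_univ _, card_blockImage hm σ⟩
  · intro a ha b hb h
    rw [Finset.mem_filter] at ha hb
    rw [isUnsh_eq_permOf hm a ha.2, isUnsh_eq_permOf hm b hb.2, permOf_congr hm h]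
  · intro S hS
    rw [Finset.mem_powersetCard] at hS
    exact ⟨permOf hm S hS.2,
      Finset.mem_filter.2 ⟨Finset.mem_univ _, permOf_isUnsh hm hS.2⟩,
      blockImage_permOf hm hS.2⟩
  · intro σ hσ
    rw [Finset.mem_filter] at hσ
    exact sign_isUnsh hm σ hσ.2

lemma subset_sum_eq (n m : ℕ) :
    (∑ S ∈ Finset.powersetCard m (Finset.univ : Finset (Fin n)),
      (-1 : ℤ) ^ (∑ x ∈ S, (x : ℕ))) = gSum n m := by
  rw [gSum]
  have h1 : Finset.range n = (Finset.univ : Finset (Fin n)).map Fin.valEmbedding := by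
    rw [Fin.map_valEmbedding_univ]
    ext a; simp
  rw [h1, Finset.powersetCard_map, Finset.sum_map]
  refine Finset.sum_congr rfl fun S _ => ?_
  congr 1
  rw [show ((Finset.mapEmbedding Fin.valEmbedding).toEmbedding S)
      = S.map Fin.valEmbedding from rfl, Finset.sum_map]
  rfl

/-- `C(k, j)` for `k = 2p`, `j = 2q`: the signed count of `(k-j, j-1)`-unshuffles
equals `C(p-1, q-1)`. -/
theorem unshuffle_count_even_even (p q : ℕ) (h1 : 1 ≤ q) (h2 : q ≤ p) :
    unshuffleSignSum (2 * p - 1) (2 * p - 2 * q) = ((p - 1).choose (q - 1) : ℤ) := by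
  have hm : 2 * p - 2 * q ≤ 2 * p - 1 := by omega
  rw [bridge hm]
  have hsplit : (∑ S ∈ Finset.powersetCard (2 * p - 2 * q)
        (Finset.univ : Finset (Fin (2 * p - 1))),
      (-1 : ℤ) ^ ((∑ x ∈ S, (x : ℕ)) + ∑ i ∈ Finset.range (2 * p - 2 * q), i))
      = (-1 : ℤ) ^ (∑ i ∈ Finset.range (2 * p - 2 * q), i) *
        ∑ S ∈ Finset.powersetCard (2 * p - 2 * q)
          (Finset.univ : Finset (Fin (2 * p - 1))), (-1 : ℤ) ^ (∑ x ∈ S, (x : ℕ)) := by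
    rw [Finset.mul_sum]
    refine Finset.sum_congr rfl fun S _ => ?_
    rw [pow_add]; ring
  rw [hsplit, subset_sum_eq, gSum_eq, ← mul_assoc, ← pow_add,
    Even.neg_one_pow ⟨_, rfl⟩, one_mul]
  have : Bval (2 * p - 1) (2 * p - 2 * q) = (p - 1).choose (q - 1) := by
    unfold Bval
    rw [if_neg (by omega), show (2 * p - 1) / 2 = p - 1 by omega,
      show (2 * p - 2 * q) / 2 = p - q by omega,
      show p - q = (p - 1) - (q - 1) by omega, Nat.choose_symm (by omega)]
  rw [this]
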